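/- Let n ≥ 1, let U = (u_{ij})_{1 ≤ i,j ≤ n} be a real symmetric n×n matrix, let y₁ ∈ ℝ, set λ = √(1 + y₁²), and let r ∈ ℝ with r ≠ 0. Define the (n+1)×(n+1) matrix B (indices 0,…,n) by B₀₀ = −λ²/r, B₀₁ = B₁₀ = y₁, B₀ⱼ = Bⱼ₀ = 0 for 2 ≤ j ≤ n, and Bᵢⱼ = λ·u_{ij} − r·δ_{ij} for 1 ≤ i,j ≤ n. Define the n×n matrix A by A₁₁ = λ³·u₁₁, A₁ⱼ = Aⱼ₁ = λ²·u_{1j} for 2 ≤ j ≤ n, and Aᵢⱼ = λ·u_{ij} for 2 ≤ i,j ≤ n. Then det B = 0 if and only if det(A − r·Iₙ) = 0, i.e. if and only if r is an eigenvalue of A. -/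

import Mathlib

open Matrix

/-- computation `spezGl` in the paper. With `B` the bordered matrix
built from the Hessian `U`, `y₁` and `λ = √(1+y₁²)`, and `A` the matrix obtained from
`λU` by multiplying the first row and first column by `λ`, a nonzero `r` satisfies
`det B = 0` iff `r` is an eigenvalue of `A`, i.e. `det(A − r·I) = 0`. -/
theorem stmt_9 (n : ℕ) (U : Matrix (Fin (n + 1)) (Fin (n + 1)) ℝ) (hU : U.IsSymm)
    (y₁ r : ℝ) (hr : r ≠ 0) (l : ℝ) (hl : l = Real.sqrt (1 + y₁ ^ 2))
    (B : Matrix (Fin 1 ⊕ Fin (n + 1)) (Fin 1 ⊕ Fin (n + 1)) ℝ)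
    (hB : B = Matrix.fromBlocks
      (Matrix.of fun _ _ => -l ^ 2 / r)
      (Matrix.of fun _ j => if j = 0 then y₁ else 0)
      (Matrix.of fun i _ => if i = 0 then y₁ else 0)
      (l • U - r • (1 : Matrix (Fin (n + 1)) (Fin (n + 1)) ℝ)))
    (A : Matrix (Fin (n + 1)) (Fin (n + 1)) ℝ)
    (hA : A = Matrix.of fun i j =>
      if i = 0 ∧ j = 0 then l ^ 3 * U i j
      else if i = 0 ∨ j = 0 then l ^ 2 * U i j
      else l * U i j) :
    B.det = 0 ↔ (A - r • (1 : Matrix (Fin (n + 1)) (Fin (n + 1)) ℝ)).det = 0 := by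
  have hlpos : 0 < l := by
    rw [hl]; exact Real.sqrt_pos.mpr (by positivity)
  have hlne : l ≠ 0 := ne_of_gt hlpos
  have hl2 : l ^ 2 = 1 + y₁ ^ 2 := by
    rw [hl, Real.sq_sqrt (by positivity)]
  -- the common middle matrix
  set M : Matrix (Fin (n + 1)) (Fin (n + 1)) ℝ :=
    Matrix.of fun i j =>
      l * U i j - (if i = j then (if i = 0 then r / l ^ 2 else r) else 0) with hM
  -- the 1×1 corner block and its inverse
  set A₀ : Matrix (Fin 1) (Fin 1) ℝ := Matrix.of fun _ _ => -l ^ 2 / r with hA₀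
  have h1 : (Matrix.of fun _ _ => -r / l ^ 2 : Matrix (Fin 1) (Fin 1) ℝ) * A₀ = 1 := by
    ext i j
    simp [hA₀, Matrix.mul_apply, Fin.sum_univ_one, Matrix.one_apply,
      Subsingleton.elim i j]
    field_simp
  have h2 : A₀ * (Matrix.of fun _ _ => -r / l ^ 2 : Matrix (Fin 1) (Fin 1) ℝ) = 1 := by
    ext i j
    simp [hA₀, Matrix.mul_apply, Fin.sum_univ_one, Matrix.one_apply,
      Subsingleton.elim i j]
    field_simp
  letI : Invertible A₀ := ⟨Matrix.of fun _ _ => -r / l ^ 2, h1, h2⟩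
  have hinvOf : (⅟A₀ : Matrix (Fin 1) (Fin 1) ℝ) = Matrix.of fun _ _ => -r / l ^ 2 := rfl
  -- det B = (-l²/r) * det M
  have hdetB : B.det = (-l ^ 2 / r) * M.det := by
    rw [hB]
    rw [Matrix.det_fromBlocks₁₁]
    congr 1
    · simp [hA₀]
    · congr 1
      ext i j
      rw [hinvOf]
      simp only [Matrix.sub_apply, Matrix.smul_apply, Matrix.one_apply, Matrix.mul_apply,
        Fin.sum_univ_one, Matrix.of_apply, hM, smul_eq_mul]
      by_cases hi : i = 0 <;> by_cases hj : j = 0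
      · subst hi; subst hj
        simp only [if_pos rfl, ↓reduceIte]
        field_simp
        linear_combination (-r) * hl2
      · simp [hi, hj, Ne.symm hj]
      · simp [hi, hj]
      · simp [hi, hj]
  -- A - r•1 = diag d * M * diag d
  have hfac : A - r • (1 : Matrix (Fin (n + 1)) (Fin (n + 1)) ℝ)
      = Matrix.diagonal (fun i => if i = 0 then l else 1) * M *
        Matrix.diagonal (fun i => if i = 0 then l else 1) := by
    ext i j
    rw [Matrix.mul_diagonal, Matrix.diagonal_mul]
    simp only [Matrix.sub_apply, Matrix.smul_apply, Matrix.one_apply, hA, hM,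
      Matrix.of_apply, smul_eq_mul]
    by_cases hi : i = 0 <;> by_cases hj : j = 0
    · subst hi; subst hj
      simp only [if_pos rfl, and_self, ↓reduceIte]
      field_simp
    · simp [hi, hj, Ne.symm hj]; ring
    · simp [hi, hj]; ring
    · simp [hi, hj]
  have hdetA : (A - r • (1 : Matrix (Fin (n + 1)) (Fin (n + 1)) ℝ)).det = l * M.det * l := by
    rw [hfac, Matrix.det_mul, Matrix.det_mul, Matrix.det_diagonal]
    simp
  rw [hdetB, hdetA]
  constructor
  · intro h
    rcases mul_eq_zero.mp h with h | h
    · exact absurd h (div_ne_zero (neg_ne_zero.mpr (pow_ne_zero 2 hlne)) hr)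
    · simp [h]
  · intro h
    rcases mul_eq_zero.mp h with h | h
    · rcases mul_eq_zero.mp h with h | h
      · exact absurd h hlne
      · simp [h]
    · exact absurd h hlne
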